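/- Let C be a triangulated category and let (L, R) be a deflation factorization system in C. Then (Cocone L, Cocone R) is a t-structure in C. -/

import Mathlib

open CategoryTheory CategoryTheory.Limits CategoryTheory.Pretriangulated

open ZeroObject

namespace TriangFS

variable {C : Type*} [Category C] [Preadditive C] [HasZeroObject C]
  [HasShift C ℤ] [∀ n : ℤ, (shiftFunctor C n).Additive]
  [Pretriangulated C] [IsTriangulated C]

/-- `K` is a cocone of `f : X ⟶ Y` if it fits in a distinguished triangle
`K ⟶ X ⟶ Y ⟶ K⟦1⟧`. -/
def IsCoconeOf {X Y : C} (f : X ⟶ Y) (K : C) : Prop :=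
  ∃ (g : K ⟶ X) (h : Y ⟶ K⟦(1 : ℤ)⟧), Triangle.mk g f h ∈ distTriang C

/-- `l ⊥ r` iff `Hom(K_l, K_r) = 0` and `Hom(K_l, K_r⟦-1⟧) = 0` for cocones
`K_l` of `l` and `K_r` of `r`. -/
def CoconePerp {X Y Z W : C} (l : X ⟶ Y) (r : Z ⟶ W) : Prop :=
  ∀ (Kl Kr : C), IsCoconeOf l Kl → IsCoconeOf r Kr →
    (∀ φ : Kl ⟶ Kr, φ = 0) ∧ (∀ φ : Kl ⟶ Kr⟦(-1 : ℤ)⟧, φ = 0)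

/-- `Defl U`: morphisms admitting a cocone in `U`. -/
def Defl (U : Set C) : MorphismProperty C :=
  fun _ _ f => ∃ K ∈ U, IsCoconeOf f K

/-- `Cocone L`: objects isomorphic to a cocone of some morphism in `L`. -/
def CoconeClass (L : MorphismProperty C) : Set C :=
  {K | ∃ (X Y : C) (f : X ⟶ Y), L f ∧ IsCoconeOf f K}

/-- A `t`-structure `(U, V)` in a triangulated category. -/
structure IsTStructure (U V : Set C) : Prop where
  isoClosed_left : ∀ {X Y : C}, (X ≅ Y) → X ∈ U → Y ∈ U
  isoClosed_right : ∀ {X Y : C}, (X ≅ Y) → X ∈ V → Y ∈ V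
  exists_triangle : ∀ X : C, ∃ (U' V' : C) (_ : U' ∈ U) (_ : V' ∈ V)
      (f : U' ⟶ X) (g : X ⟶ V') (h : V' ⟶ U'⟦(1 : ℤ)⟧),
      Triangle.mk f g h ∈ distTriang C
  hom_zero : ∀ {X Y : C}, X ∈ U → Y ∈ V → ∀ f : X ⟶ Y, f = 0
  shift_mem : ∀ {X : C}, X ∈ U → X⟦(1 : ℤ)⟧ ∈ U

/-- A deflation factorization system `(L, R)` in a triangulated category. -/
structure IsDeflFactorizationSystem (L R : MorphismProperty C) : Prop where
  factor : ∀ {X Y : C} (f : X ⟶ Y),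
    ∃ (K : C) (l : X ⟶ K) (r : K ⟶ Y), L l ∧ R r ∧ l ≫ r = f
  left_eq : ∀ {X Y : C} (f : X ⟶ Y),
    L f ↔ ∀ {Z W : C} (g : Z ⟶ W), R g → CoconePerp f g
  right_eq : ∀ {Z W : C} (g : Z ⟶ W),
    R g ↔ ∀ {X Y : C} (f : X ⟶ Y), L f → CoconePerp f g

/- ### Auxiliary lemmas -/

lemma isCoconeOf_iso {X Y K K' : C} {f : X ⟶ Y} (hK : IsCoconeOf f K) (e : K ≅ K') :
    IsCoconeOf f K' := by
  obtain ⟨g, u, hd⟩ := hK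
  refine ⟨e.inv ≫ g, u ≫ (shiftFunctor C (1 : ℤ)).map e.hom, ?_⟩
  refine isomorphic_distinguished _ hd _ ?_
  exact Triangle.isoMk _ _ e.symm (Iso.refl _) (Iso.refl _) (Category.comp_id _)
    ((Category.comp_id _).trans (Category.id_comp _).symm)
    (by show (u ≫ (shiftFunctor C (1 : ℤ)).map e.hom) ≫ (shiftFunctor C (1 : ℤ)).map e.inv = 𝟙 _ ≫ u; rw [Category.assoc, ← Functor.map_comp, e.hom_inv_id, CategoryTheory.Functor.map_id]; exact (Category.comp_id _).trans (Category.id_comp _).symm)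

lemma exists_isCoconeOf {X Y : C} (f : X ⟶ Y) : ∃ K, IsCoconeOf f K := by
  obtain ⟨Z, g, u, hd⟩ := distinguished_cocone_triangle f
  have := inv_rot_of_distTriang _ hd
  exact ⟨Z⟦(-1 : ℤ)⟧, (Triangle.mk f g u).invRotate.mor₁,
    (Triangle.mk f g u).invRotate.mor₃, this⟩

lemma isCoconeOf_unique {X Y K K' : C} {f : X ⟶ Y} (hK : IsCoconeOf f K)
    (hK' : IsCoconeOf f K') : Nonempty (K ≅ K') := by
  obtain ⟨g, u, hd⟩ := hK
  obtain ⟨g', u', hd'⟩ := hK'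
  have hd₁ := rot_of_distTriang _ hd
  have hd₂ := rot_of_distTriang _ hd'
  let e := isoTriangleOfIso₁₂ _ _ hd₁ hd₂ (Iso.refl X) (Iso.refl Y) ((Category.comp_id _).trans (Category.id_comp _).symm)
  exact ⟨(shiftFunctor C (1 : ℤ)).preimageIso (Triangle.π₃.mapIso e)⟩

lemma isCoconeOf_zero_to_zero (X : C) : IsCoconeOf (0 : X ⟶ 0) X :=
  ⟨𝟙 X, 0, contractible_distinguished X⟩

lemma hom_zero_of_iso_tgt {A B B' : C} (e : B ≅ B') (h : ∀ φ : A ⟶ B', φ = 0)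
    (φ : A ⟶ B) : φ = 0 := by
  have h1 := h (φ ≫ e.hom)
  calc φ = (φ ≫ e.hom) ≫ e.inv := by simp
  _ = 0 := by rw [h1, zero_comp]

lemma hom_zero_of_iso_src {A A' B : C} (e : A ≅ A') (h : ∀ φ : A' ⟶ B, φ = 0)
    (φ : A ⟶ B) : φ = 0 := by
  have h1 := h (e.inv ≫ φ)
  calc φ = e.hom ≫ (e.inv ≫ φ) := by simp
  _ = 0 := by rw [h1, comp_zero]

lemma hom_zero_shift_up {A B : C} (h : ∀ ψ : A ⟶ B⟦(-1 : ℤ)⟧, ψ = 0)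
    (φ : A⟦(1 : ℤ)⟧ ⟶ B) : φ = 0 := by
  have h1 : (shiftFunctor C (-1 : ℤ)).map φ = 0 := by
    have h2 := h ((shiftFunctorCompIsoId C (1 : ℤ) (-1 : ℤ) (by ring)).inv.app A ≫
      (shiftFunctor C (-1 : ℤ)).map φ)
    calc (shiftFunctor C (-1 : ℤ)).map φ
        = (shiftFunctorCompIsoId C (1 : ℤ) (-1 : ℤ) (by ring)).hom.app A ≫
          ((shiftFunctorCompIsoId C (1 : ℤ) (-1 : ℤ) (by ring)).inv.app A ≫
            (shiftFunctor C (-1 : ℤ)).map φ) := by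
          rw [← Category.assoc, Iso.hom_inv_id_app, Category.id_comp]
    _ = 0 := by rw [h2, comp_zero]
  exact (shiftFunctor C (-1 : ℤ)).map_injective (by rw [h1, Functor.map_zero])

lemma hom_zero_shift_down {A B : C} (h : ∀ ψ : A⟦(1 : ℤ)⟧ ⟶ B, ψ = 0)
    (φ : A ⟶ B⟦(-1 : ℤ)⟧) : φ = 0 := by
  have h1 : (shiftFunctor C (1 : ℤ)).map φ = 0 := by
    have h2 := h ((shiftFunctor C (1 : ℤ)).map φ ≫
      (shiftFunctorCompIsoId C (-1 : ℤ) (1 : ℤ) (by ring)).hom.app B)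
    calc (shiftFunctor C (1 : ℤ)).map φ
        = ((shiftFunctor C (1 : ℤ)).map φ ≫
            (shiftFunctorCompIsoId C (-1 : ℤ) (1 : ℤ) (by ring)).hom.app B) ≫
          (shiftFunctorCompIsoId C (-1 : ℤ) (1 : ℤ) (by ring)).inv.app B := by
          simp
    _ = 0 := by rw [h2, zero_comp]
  exact (shiftFunctor C (1 : ℤ)).map_injective (by rw [h1, Functor.map_zero])

lemma perp_of_mem {L R : MorphismProperty C} (h : IsDeflFactorizationSystem L R)
    {A B : C} (hA : A ∈ CoconeClass L) (hB : B ∈ CoconeClass R) :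
    (∀ φ : A ⟶ B, φ = 0) ∧ (∀ φ : A ⟶ B⟦(-1 : ℤ)⟧, φ = 0) := by
  obtain ⟨X, Y, l, hl, hAl⟩ := hA
  obtain ⟨Z, W, r, hr, hBr⟩ := hB
  exact (h.left_eq l).mp hl r hr A B hAl hBr

lemma mem_right_of_factor {L R : MorphismProperty C} (_ : IsDeflFactorizationSystem L R)
    {M : C} (r : M ⟶ (0 : C)) (hr : R r) : M ∈ CoconeClass R := by
  refine ⟨M, 0, r, hr, ?_⟩
  have : r = 0 := (isZero_zero C).eq_of_tgt r 0
  rw [this]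
  exact isCoconeOf_zero_to_zero M

/-- `V = Cocone R` is closed under `⟦-1⟧`. -/
lemma shift_neg_mem_right {L R : MorphismProperty C} (h : IsDeflFactorizationSystem L R)
    {Y : C} (hY : Y ∈ CoconeClass R) : Y⟦(-1 : ℤ)⟧ ∈ CoconeClass R := by
  obtain ⟨M, l, r'', hl, hr'', -⟩ := h.factor (0 : Y⟦(-1 : ℤ)⟧ ⟶ 0)
  have hM : M ∈ CoconeClass R := mem_right_of_factor h r'' hr''
  obtain ⟨Kl, hKl⟩ := exists_isCoconeOf l
  have hKlL : Kl ∈ CoconeClass L := ⟨_, _, l, hl, hKl⟩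
  obtain ⟨a, b, hTK⟩ := hKl
  have ha : a = 0 := (perp_of_mem h hKlL hY).2 a
  have hR0 : R (0 : Y⟦(-1 : ℤ)⟧ ⟶ 0) := by
    refine (h.right_eq _).mpr ?_
    intro X X' l' hl' K₁ K₂ hK₁ hK₂
    obtain ⟨e⟩ := isCoconeOf_unique hK₂ (isCoconeOf_zero_to_zero (Y⟦(-1 : ℤ)⟧))
    have hK₁L : K₁ ∈ CoconeClass L := ⟨_, _, l', hl', hK₁⟩
    constructor
    · exact hom_zero_of_iso_tgt e (fun φ => (perp_of_mem h hK₁L hY).2 φ)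
    · refine hom_zero_of_iso_tgt ((shiftFunctor C (-1 : ℤ)).mapIso e) (fun φ => ?_)
      refine hom_zero_shift_down (fun ψ => ?_) φ
      have h1 : ψ ≫ l = 0 :=
        hom_zero_shift_up (fun χ => (perp_of_mem h hK₁L hM).2 χ) (ψ ≫ l)
      obtain ⟨g, hg⟩ := Triangle.coyoneda_exact₂ _ hTK ψ h1
      rw [hg]
      change g ≫ a = 0
      rw [ha]; exact comp_zero
  exact mem_right_of_factor h _ hR0

theorem deflFactorizationSystem_cocone_isTStructure
    (L R : MorphismProperty C) (h : IsDeflFactorizationSystem L R) :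
    IsTStructure (CoconeClass L) (CoconeClass R) := by
  constructor
  · rintro X Y e ⟨A, B, f, hf, hc⟩
    exact ⟨A, B, f, hf, isCoconeOf_iso hc e⟩
  · rintro X Y e ⟨A, B, f, hf, hc⟩
    exact ⟨A, B, f, hf, isCoconeOf_iso hc e⟩
  · intro X
    obtain ⟨M, l, r, hl, hr, -⟩ := h.factor (0 : X ⟶ 0)
    obtain ⟨Kl, hKl⟩ := exists_isCoconeOf l
    have hKlL : Kl ∈ CoconeClass L := ⟨_, _, l, hl, hKl⟩
    obtain ⟨a, b, hTK⟩ := hKl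
    exact ⟨Kl, M, hKlL, mem_right_of_factor h r hr, a, l, b, hTK⟩
  · intro X Y hX hY f
    exact (perp_of_mem h hX hY).1 f
  · intro X hX
    have hXL : X ∈ CoconeClass L := hX
    have hL1 : L (0 : X⟦(1 : ℤ)⟧ ⟶ 0) := by
      refine (h.left_eq _).mpr ?_
      intro Z W r hr K₁ K₂ hK₁ hK₂
      obtain ⟨e⟩ := isCoconeOf_unique hK₁ (isCoconeOf_zero_to_zero (X⟦(1 : ℤ)⟧))
      have hK₂R : K₂ ∈ CoconeClass R := ⟨Z, W, r, hr, hK₂⟩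
      constructor
      · refine hom_zero_of_iso_src e (fun φ => ?_)
        exact hom_zero_shift_up (fun χ => (perp_of_mem h hXL hK₂R).2 χ) φ
      · refine hom_zero_of_iso_src e (fun φ => ?_)
        exact hom_zero_shift_up
          (fun χ => (perp_of_mem h hXL (shift_neg_mem_right h hK₂R)).2 χ) φ
    exact ⟨_, _, _, hL1, isCoconeOf_zero_to_zero (X⟦(1 : ℤ)⟧)⟩

end TriangFS
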